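/- Let κ ≠ 0 and for ℓ ∈ ℤ set φ_ℓ^κ(r) = J_{|ℓ|}(√κ r)/J_{|ℓ|}(√κ) and ψ_ℓ^κ(r) = √κ r (J₁(√κ r)/J₀(√κ r) − J_{|ℓ|+1}(√κ r)/J_{|ℓ|}(√κ r)). With ∂_± = (1/2)e^{±iθ}(∂_r ± (i/r)∂_θ), the function u_ℓ^κ(re^{iθ}) = (φ_ℓ^κ(r)/φ_0^κ(r)) e^{iℓθ}/√(2π) satisfies ∂_± u_ℓ^κ(re^{iθ}) = e^{±iθ} (ψ_ℓ^κ(r) + |ℓ| ∓ ℓ)/(2r) · u_ℓ^κ(re^{iθ}), wherever J₀(√κ r) and J_{|ℓ|}(√κ r) are nonzero and r > 0. -/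

import Mathlib

open Complex

noncomputable def besselJ (n : ℕ) (z : ℂ) : ℂ :=
  ∑' k : ℕ, (-1 : ℂ) ^ k * (z / 2) ^ (n + 2 * k) /
    ((Nat.factorial k : ℂ) * (Nat.factorial (n + k) : ℂ))

namespace BJ

noncomputable def bt (n : ℕ) (z : ℂ) (k : ℕ) : ℂ :=
  (-1 : ℂ) ^ k * (z / 2) ^ (n + 2 * k) /
    ((Nat.factorial k : ℂ) * (Nat.factorial (n + k) : ℂ))

noncomputable def dt (n : ℕ) (z : ℂ) (k : ℕ) : ℂ :=
  (-1 : ℂ) ^ k * ((n + 2 * k : ℕ) : ℂ) * (z / 2) ^ (n + 2 * k - 1) /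
    (2 * (Nat.factorial k : ℂ) * (Nat.factorial (n + k) : ℂ))

lemma besselJ_eq (n : ℕ) (z : ℂ) : besselJ n z = ∑' k, bt n z k := rfl

lemma norm_bt (n : ℕ) (z : ℂ) (k : ℕ) :
    ‖bt n z k‖ = ‖z / 2‖ ^ (n + 2 * k) / (Nat.factorial k * Nat.factorial (n + k)) := by
  simp [bt, norm_div, norm_mul, norm_pow]

lemma norm_dt (n : ℕ) (z : ℂ) (k : ℕ) :
    ‖dt n z k‖ = (n + 2 * k) * ‖z / 2‖ ^ (n + 2 * k - 1) /
      (2 * Nat.factorial k * Nat.factorial (n + k)) := by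
  simp only [dt, norm_div, norm_mul, norm_pow, norm_neg, norm_one, one_pow, one_mul,
    Complex.norm_natCast]
  norm_num

lemma fact_pos' (k : ℕ) : (0:ℝ) < Nat.factorial k := by positivity

lemma norm_dt_le (n : ℕ) (z : ℂ) (k : ℕ) :
    ‖dt n z k‖ ≤ (n + 2 * k) * ‖z / 2‖ ^ (n + 2 * k - 1) / (Nat.factorial k) := by
  rw [norm_dt]
  rw [div_le_div_iff₀ (by positivity) (by positivity)]
  have h1 : (1:ℝ) ≤ (n+k).factorial := by exact_mod_cast (n+k).factorial_pos
  have h2 : (0:ℝ) ≤ (n + 2*k : ℝ) * ‖z/2‖ ^ (n + 2*k - 1) := by positivity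
  have h3 : (0:ℝ) ≤ (↑n + 2 * ↑k) * ‖z / 2‖ ^ (n + 2 * k - 1) * ↑k.factorial :=
    mul_nonneg h2 (le_of_lt (fact_pos' k))
  nlinarith [mul_le_mul_of_nonneg_left h1 h3]

-- key growth bound: n + 2k ≤ (n+2) * 2^k
lemma growth (n k : ℕ) : (n + 2 * k : ℝ) ≤ (n + 2) * 2 ^ k := by
  have h1 : (k + 1 : ℝ) ≤ 2 ^ k := by exact_mod_cast (Nat.lt_two_pow_self (n := k))
  nlinarith [pow_pos (by norm_num : (0:ℝ) < 2) k, Nat.cast_nonneg (α := ℝ) n, Nat.cast_nonneg (α := ℝ) k]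

lemma pow_le_M (x M : ℝ) (h1 : 1 ≤ M) (hx : x ≤ M) (hx0 : 0 ≤ x) (m j : ℕ) (hj : j ≤ m) :
    x ^ j ≤ M ^ m := le_trans (pow_le_pow_left₀ hx0 hx j) (pow_le_pow_right₀ h1 hj)

lemma summable_main (n : ℕ) (M : ℝ) :
    Summable (fun k : ℕ => (n + 2:ℝ) * M ^ n * (2 * M ^ 2) ^ k / Nat.factorial k) := by
  have := Real.summable_pow_div_factorial (2 * M ^ 2)
  simpa [mul_div_assoc] using this.mul_left ((n + 2:ℝ) * M ^ n)

lemma summable_bt (n : ℕ) (z : ℂ) : Summable (fun k => bt n z k) := by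
  apply Summable.of_norm
  set M := max 1 ‖z / 2‖ with hM
  have hM1 : (1:ℝ) ≤ M := le_max_left _ _
  have hzM : ‖z / 2‖ ≤ M := le_max_right _ _
  refine Summable.of_nonneg_of_le (fun k => norm_nonneg _) (fun k => ?_)
    ((Real.summable_pow_div_factorial (M ^ 2)).mul_left (M ^ n))
  · rw [norm_bt]
    have h1 : ‖z / 2‖ ^ (n + 2 * k) ≤ M ^ (n + 2 * k) :=
      pow_le_pow_left₀ (norm_nonneg _) hzM _
    have h2 : (Nat.factorial k : ℝ) ≤ Nat.factorial k * Nat.factorial (n + k) := by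
      have : (1:ℝ) ≤ Nat.factorial (n+k) := by exact_mod_cast (n+k).factorial_pos
      nlinarith [fact_pos' k]
    calc ‖z / 2‖ ^ (n + 2 * k) / (↑(Nat.factorial k) * ↑(Nat.factorial (n + k)))
        ≤ M ^ (n + 2 * k) / (Nat.factorial k) :=
          div_le_div₀ (by positivity) h1 (fact_pos' k) h2
      _ = M ^ n * ((M ^ 2) ^ k / Nat.factorial k) := by
          rw [pow_add, pow_mul]; ring

lemma bound_dt (n : ℕ) (R : ℝ) (x : ℂ) (hx : ‖x‖ ≤ R) (k : ℕ) :
    ‖dt n x k‖ ≤ (n + 2:ℝ) * (max 1 (R/2)) ^ n * (2 * (max 1 (R/2)) ^ 2) ^ k /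
      Nat.factorial k := by
  set M := max 1 (R/2) with hM
  have hM1 : (1:ℝ) ≤ M := le_max_left _ _
  have hxM : ‖x / 2‖ ≤ M := by
    rw [norm_div, Complex.norm_ofNat]
    exact le_trans (by linarith) (le_max_right _ _)
  refine (norm_dt_le n x k).trans ?_
  have key : (n + 2 * k : ℝ) * ‖x / 2‖ ^ (n + 2 * k - 1) ≤ (n + 2) * M ^ n * (2 * M ^ 2) ^ k := by
    have h2 : ‖x / 2‖ ^ (n + 2 * k - 1) ≤ M ^ (n + 2 * k) :=
      pow_le_M _ _ hM1 hxM (norm_nonneg _) _ _ (Nat.sub_le _ _)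
    calc (n + 2 * k : ℝ) * ‖x / 2‖ ^ (n + 2 * k - 1)
        ≤ ((n + 2) * 2 ^ k) * M ^ (n + 2 * k) := by
          apply mul_le_mul (growth n k) h2 (by positivity) (by positivity)
      _ = (n + 2) * M ^ n * (2 * M ^ 2) ^ k := by
          rw [pow_add, pow_mul, mul_pow]; ring
  gcongr

lemma summable_dt (n : ℕ) (z : ℂ) : Summable (fun k => dt n z k) := by
  apply Summable.of_norm
  exact Summable.of_nonneg_of_le (fun k => norm_nonneg _) (bound_dt n ‖z‖ z le_rfl)
    (summable_main n _)

lemma hasDerivAt_bt (n k : ℕ) (z : ℂ) : HasDerivAt (fun w => bt n w k) (dt n z k) z := by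
  have h : HasDerivAt (fun w : ℂ => (w / 2) ^ (n + 2 * k))
      (((n + 2 * k : ℕ) : ℂ) * (z / 2) ^ (n + 2 * k - 1) * (1 / 2)) z :=
    ((hasDerivAt_id z).div_const 2).pow _
  have h2 := (h.const_mul ((-1 : ℂ) ^ k)).div_const
    ((Nat.factorial k : ℂ) * (Nat.factorial (n + k) : ℂ))
  refine h2.congr_deriv ?_
  simp only [dt]
  ring

lemma hasDerivAt_besselJ (n : ℕ) (z : ℂ) :
    HasDerivAt (besselJ n) (∑' k, dt n z k) z := by
  have hz : z ∈ Metric.ball (0:ℂ) (‖z‖ + 1) := by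
    simp [Metric.mem_ball, dist_zero_right]
  have h := hasDerivAt_tsum_of_isPreconnected
    (u := fun k : ℕ => (n + 2:ℝ) * (max 1 ((‖z‖+1)/2)) ^ n *
      (2 * (max 1 ((‖z‖+1)/2)) ^ 2) ^ k / Nat.factorial k)
    (summable_main n _) Metric.isOpen_ball ((convex_ball _ _).isPreconnected)
    (fun k y _ => hasDerivAt_bt n k y)
    (fun k y hy => bound_dt n (‖z‖+1) y
      (le_of_lt (by simpa [Metric.mem_ball, dist_zero_right] using hy)) k)
    hz (summable_bt n z) hz
  exact h


lemma z_mul_dt (n : ℕ) (z : ℂ) (k : ℕ) :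
    z * dt n z k = ((n + 2 * k : ℕ) : ℂ) * bt n z k := by
  rcases Nat.eq_zero_or_pos (n + 2 * k) with h | h
  · simp [dt, bt, h]
  · obtain ⟨j, hj⟩ : ∃ j, n + 2 * k = j + 1 := ⟨n + 2 * k - 1, (Nat.succ_pred_eq_of_pos h).symm⟩
    simp only [dt, bt, hj, Nat.add_sub_cancel, pow_succ]
    have hk : (Nat.factorial k : ℂ) ≠ 0 := Nat.cast_ne_zero.2 (Nat.factorial_ne_zero k)
    have hnk : (Nat.factorial (n + k) : ℂ) ≠ 0 := Nat.cast_ne_zero.2 (Nat.factorial_ne_zero _)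
    field_simp

lemma summable_twok (n : ℕ) (z : ℂ) :
    Summable (fun k : ℕ => (2 * (k:ℂ)) * bt n z k) := by
  have he : (fun k : ℕ => (2 * (k:ℂ)) * bt n z k) =
      fun k => z * dt n z k - (n : ℂ) * bt n z k := by
    funext k
    rw [z_mul_dt]
    push_cast
    ring
  rw [he]
  exact ((summable_dt n z).mul_left z).sub ((summable_bt n z).mul_left _)

lemma term_shift (n : ℕ) (z : ℂ) (k : ℕ) :
    (2 * ((k + 1 : ℕ):ℂ)) * bt n z (k + 1) = -z * bt (n + 1) z k := by
  simp only [bt]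
  rw [show n + 2 * (k + 1) = (n + 1 + 2 * k) + 1 from by ring, pow_succ,
    show n + (k + 1) = n + 1 + k from by ring, Nat.factorial_succ, pow_succ]
  have hk : (Nat.factorial k : ℂ) ≠ 0 := Nat.cast_ne_zero.2 (Nat.factorial_ne_zero k)
  have hnk : (Nat.factorial (n + 1 + k) : ℂ) ≠ 0 := Nat.cast_ne_zero.2 (Nat.factorial_ne_zero _)
  have hk1 : ((k:ℂ) + 1) ≠ 0 := Nat.cast_add_one_ne_zero k
  push_cast
  field_simp

lemma tsum_twok (n : ℕ) (z : ℂ) :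
    ∑' k : ℕ, (2 * (k:ℂ)) * bt n z k = -z * besselJ (n + 1) z := by
  rw [Summable.tsum_eq_zero_add (summable_twok n z)]
  simp only [Nat.cast_zero, mul_zero, zero_mul, zero_add]
  have : ∀ k : ℕ, (2 * ((k + 1 : ℕ):ℂ)) * bt n z (k + 1) = -z * bt (n + 1) z k :=
    term_shift n z
  calc ∑' k : ℕ, 2 * (((k + 1 : ℕ)):ℂ) * bt n z (k + 1)
      = ∑' k : ℕ, -z * bt (n + 1) z k := tsum_congr fun k => term_shift n z k
    _ = -z * besselJ (n + 1) z := by rw [tsum_mul_left, besselJ_eq]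

lemma deriv_identity (n : ℕ) (z : ℂ) :
    z * (∑' k, dt n z k) = (n : ℂ) * besselJ n z - z * besselJ (n + 1) z := by
  rw [← tsum_mul_left]
  have h1 : ∀ k : ℕ, z * dt n z k = (n:ℂ) * bt n z k + (2 * (k:ℂ)) * bt n z k := by
    intro k
    rw [z_mul_dt]
    push_cast
    ring
  rw [tsum_congr h1, Summable.tsum_add ((summable_bt n z).mul_left _) (summable_twok n z),
    tsum_mul_left, tsum_twok]
  simp only [besselJ_eq]
  ring

lemma hasDerivAt_comp (n : ℕ) (c : ℂ) (r : ℝ) :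
    HasDerivAt (fun s : ℝ => besselJ n (c * s)) (c * ∑' k, dt n (c * r) k) r := by
  have h1 : HasDerivAt (fun w : ℂ => besselJ n (c * w)) ((∑' k, dt n (c * r) k) * (c * 1)) (r:ℂ) :=
    (hasDerivAt_besselJ n (c * r)).comp (r:ℂ) (HasDerivAt.const_mul c (hasDerivAt_id (r:ℂ)))
  have h2 := h1.comp_ofReal
  simpa [mul_comm] using h2

lemma cpow_half_ne_zero {κ : ℝ} (hκ : κ ≠ 0) : ((κ : ℂ) ^ (1/2 : ℂ)) ≠ 0 := by
  rw [Complex.cpow_def_of_ne_zero (Complex.ofReal_ne_zero.2 hκ)]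
  exact Complex.exp_ne_zero _

lemma sqrt2pi_ne_zero : ((Real.sqrt (2 * Real.pi) : ℝ) : ℂ) ≠ 0 := by
  refine Complex.ofReal_ne_zero.2 (Real.sqrt_ne_zero'.2 ?_)
  positivity

end BJ

set_option maxHeartbeats 2000000 in
theorem stmt11 (κ : ℝ) (hκ : κ ≠ 0) (ℓ : ℤ) (r θ : ℝ) (hr : 0 < r)
    (h0 : besselJ 0 (((κ : ℂ) ^ (1/2 : ℂ)) * (r : ℝ)) ≠ 0)
    (hl : besselJ ℓ.natAbs (((κ : ℂ) ^ (1/2 : ℂ)) * (r : ℝ)) ≠ 0) :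
    let sκ : ℂ := (κ : ℂ) ^ (1/2 : ℂ)
    let φ : ℤ → ℝ → ℂ := fun n ρ => besselJ n.natAbs (sκ * (ρ : ℝ)) / besselJ n.natAbs sκ
    let U : ℝ → ℝ → ℂ := fun ρ ϑ =>
      φ ℓ ρ / φ 0 ρ * Complex.exp (Complex.I * ℓ * ϑ) / (Real.sqrt (2 * Real.pi) : ℝ)
    let ψ : ℂ := sκ * r * (besselJ 1 (sκ * (r : ℝ)) / besselJ 0 (sκ * (r : ℝ)) -
      besselJ (ℓ.natAbs + 1) (sκ * (r : ℝ)) / besselJ ℓ.natAbs (sκ * (r : ℝ)))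
    ((1/2 : ℂ) * Complex.exp (Complex.I * θ) *
        (deriv (fun s : ℝ => U s θ) r + Complex.I / r * deriv (fun s : ℝ => U r s) θ) =
      Complex.exp (Complex.I * θ) * ((ψ + (ℓ.natAbs : ℂ) - ℓ) / (2 * r)) * U r θ) ∧
    ((1/2 : ℂ) * Complex.exp (-(Complex.I * θ)) *
        (deriv (fun s : ℝ => U s θ) r - Complex.I / r * deriv (fun s : ℝ => U r s) θ) =
      Complex.exp (-(Complex.I * θ)) * ((ψ + (ℓ.natAbs : ℂ) + ℓ) / (2 * r)) * U r θ) := by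
  intro sκ φ U ψ
  set n : ℕ := ℓ.natAbs with hn
  have hsκ : sκ ≠ 0 := BJ.cpow_half_ne_zero hκ
  have hr0 : (r : ℂ) ≠ 0 := Complex.ofReal_ne_zero.2 hr.ne'
  have hz : sκ * (r : ℂ) ≠ 0 := mul_ne_zero hsκ hr0
  have hP : ((Real.sqrt (2 * Real.pi) : ℝ) : ℂ) ≠ 0 := BJ.sqrt2pi_ne_zero
  have hE : Complex.exp (Complex.I * ℓ * θ) ≠ 0 := Complex.exp_ne_zero _
  -- θ-derivative
  have hθin : HasDerivAt (fun s : ℝ => Complex.I * (ℓ:ℂ) * (s:ℂ)) (Complex.I * ℓ) θ := by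
    simpa using (Complex.ofRealCLM.hasDerivAt (x := θ)).const_mul (Complex.I * (ℓ:ℂ))
  have hexp : HasDerivAt (fun s : ℝ => Complex.exp (Complex.I * (ℓ:ℂ) * (s:ℂ)))
      (Complex.exp (Complex.I * ℓ * θ) * (Complex.I * ℓ)) θ := hθin.cexp
  have hUθ : deriv (fun s : ℝ => U r s) θ =
      (φ ℓ r / φ 0 r) * (Complex.exp (Complex.I * ℓ * θ) * (Complex.I * ℓ)) /
        (Real.sqrt (2 * Real.pi) : ℝ) :=
    ((hexp.const_mul (φ ℓ r / φ 0 r)).div_const _).deriv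
  by_cases hcn : besselJ n sκ = 0
  · have hU0 : ∀ ρ ϑ, U ρ ϑ = 0 := by
      intro ρ ϑ
      show besselJ n (sκ * ρ) / besselJ n sκ / (φ 0 ρ) * _ / _ = 0
      rw [hcn, div_zero, zero_div, zero_mul, zero_div]
    have hc : (fun s : ℝ => U s θ) = fun _ => 0 := funext fun s => hU0 s θ
    have hc2 : (fun s : ℝ => U r s) = fun _ => 0 := funext fun s => hU0 r s
    rw [show (deriv (fun s : ℝ => U s θ) r) = 0 by rw [hc]; simp,
      show (deriv (fun s : ℝ => U r s) θ) = 0 by rw [hc2]; simp, hU0 r θ]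
    constructor <;> ring
  by_cases hc0 : besselJ 0 sκ = 0
  · have hU0 : ∀ ρ ϑ, U ρ ϑ = 0 := by
      intro ρ ϑ
      show besselJ n (sκ * ρ) / besselJ n sκ / (besselJ 0 (sκ * ρ) / besselJ 0 sκ) * _ / _ = 0
      rw [hc0, div_zero, div_zero, zero_mul, zero_div]
    have hc : (fun s : ℝ => U s θ) = fun _ => 0 := funext fun s => hU0 s θ
    have hc2 : (fun s : ℝ => U r s) = fun _ => 0 := funext fun s => hU0 r s
    rw [show (deriv (fun s : ℝ => U s θ) r) = 0 by rw [hc]; simp,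
      show (deriv (fun s : ℝ => U r s) θ) = 0 by rw [hc2]; simp, hU0 r θ]
    constructor <;> ring
  -- main case
  have h0' : besselJ 0 (sκ * (r:ℝ)) ≠ 0 := h0
  have hl' : besselJ n (sκ * (r:ℝ)) ≠ 0 := hl
  have h1 := BJ.hasDerivAt_comp n sκ r
  have h2 := BJ.hasDerivAt_comp 0 sκ r
  set Dn : ℂ := ∑' k, BJ.dt n (sκ * r) k with hDn
  set D0 : ℂ := ∑' k, BJ.dt 0 (sκ * r) k with hD0
  have keyn : Dn = ((n : ℂ) * besselJ n (sκ * r) - sκ * r * besselJ (n + 1) (sκ * r)) /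
      (sκ * r) := by
    rw [eq_div_iff hz, mul_comm]
    exact BJ.deriv_identity n (sκ * r)
  have key0 : D0 = - besselJ 1 (sκ * r) := by
    have h := BJ.deriv_identity 0 (sκ * r)
    refine mul_left_cancel₀ hz ?_
    rw [h]; push_cast; ring
  have hψ' : ψ = sκ * r * (besselJ 1 (sκ * r) / besselJ 0 (sκ * r) -
      besselJ (n + 1) (sκ * r) / besselJ n (sκ * r)) := rfl
  have hfun : (fun s : ℝ => U s θ) = fun s : ℝ =>
      besselJ 0 sκ / besselJ n sκ * (besselJ n (sκ * s) / besselJ 0 (sκ * s)) *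
        Complex.exp (Complex.I * ℓ * θ) / ((Real.sqrt (2 * Real.pi) : ℝ) : ℂ) := by
    funext s
    show besselJ n (sκ * s) / besselJ n sκ / (besselJ 0 (sκ * s) / besselJ 0 sκ) *
      Complex.exp (Complex.I * ℓ * θ) / ((Real.sqrt (2 * Real.pi) : ℝ) : ℂ) = _
    simp only [div_eq_mul_inv, mul_inv, inv_inv]
    ring
  have hG : HasDerivAt (fun s : ℝ => besselJ n (sκ * s) / besselJ 0 (sκ * s))
      ((sκ * Dn * besselJ 0 (sκ * r) - besselJ n (sκ * r) * (sκ * D0)) /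
        (besselJ 0 (sκ * r)) ^ 2) r := h1.div h2 h0'
  have hUr : deriv (fun s : ℝ => U s θ) r =
      besselJ 0 sκ / besselJ n sκ *
        ((sκ * Dn * besselJ 0 (sκ * r) - besselJ n (sκ * r) * (sκ * D0)) /
          (besselJ 0 (sκ * r)) ^ 2) *
        Complex.exp (Complex.I * ℓ * θ) / ((Real.sqrt (2 * Real.pi) : ℝ) : ℂ) := by
    rw [hfun]
    exact (((hG.const_mul _).mul_const _).div_const _).deriv
  have hkey : (sκ * Dn * besselJ 0 (sκ * r) - besselJ n (sκ * r) * (sκ * D0)) /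
      (besselJ 0 (sκ * r)) ^ 2 =
      ((ψ + (n : ℂ)) / r) * (besselJ n (sκ * r) / besselJ 0 (sκ * r)) := by
    rw [hψ', keyn, key0]
    field_simp
    ring
  have hUval : U r θ = besselJ 0 sκ / besselJ n sκ *
      (besselJ n (sκ * r) / besselJ 0 (sκ * r)) * Complex.exp (Complex.I * ℓ * θ) /
      ((Real.sqrt (2 * Real.pi) : ℝ) : ℂ) := congrFun hfun r
  have hUr2 : deriv (fun s : ℝ => U s θ) r = ((ψ + (n : ℂ)) / r) * U r θ := by
    rw [hUr, hkey, hUval]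
    ring
  have hUθ2 : deriv (fun s : ℝ => U r s) θ = Complex.I * ℓ * U r θ := by
    rw [hUθ, hUval]
    show besselJ n (sκ * r) / besselJ n sκ / (besselJ 0 (sκ * r) / besselJ 0 sκ) *
      (Complex.exp (Complex.I * ℓ * θ) * (Complex.I * ℓ)) /
      ((Real.sqrt (2 * Real.pi) : ℝ) : ℂ) = _
    simp only [div_eq_mul_inv, mul_inv, inv_inv]
    ring
  rw [hUr2, hUθ2]
  constructor
  · linear_combination (Complex.exp (Complex.I * θ) * (U r θ) * (ℓ:ℂ) / (2 * (r:ℂ))) *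
      Complex.I_sq
  · linear_combination (-(Complex.exp (-(Complex.I * θ)) * (U r θ) * (ℓ:ℂ) / (2 * (r:ℂ)))) *
      Complex.I_sq
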